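/- For any n ≥ 1 and p ∈ (0,1], the multiple integral ∫_{[0,1]^{2n}} ∏_{i≠j} (1 - p x_i y_j) dx dy is at most ∫_{[0,1]^n} ∏_{j∈[n]} F(p·Σ_{i≠j} x_i) dx, where F(z) = (1-e^{-z})/z (with F(0) = 1). -/

import Mathlib

open MeasureTheory

/-- `F(z) = (1-e^{-z})/z`, with `F(0) = 1`. -/
noncomputable def F (z : ℝ) : ℝ := if z = 0 then 1 else (1 - Real.exp (-z)) / z

open Finset in

lemma pi_prod_integral {n : ℕ} (μ : Measure ℝ) [SigmaFinite μ] (f : Fin n → ℝ → ℝ) :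
    ∫ y : Fin n → ℝ, ∏ j, f j (y j) ∂(Measure.pi fun _ => μ) = ∏ j, ∫ t, f j t ∂μ := by
  letI : MeasureSpace ℝ := ⟨μ⟩
  haveI : SigmaFinite (volume : Measure ℝ) := ‹_›
  exact MeasureTheory.integral_fintype_prod_eq_prod f

lemma F_eq (z : ℝ) : (∫ t in Set.Icc (0:ℝ) 1, Real.exp (-(z * t))) = F z := by
  rw [MeasureTheory.integral_Icc_eq_integral_Ioc, ← intervalIntegral.integral_of_le zero_le_one]
  rcases eq_or_ne z 0 with h | h
  · simp [h, F]
  · have hderiv : ∀ t ∈ Set.uIcc (0:ℝ) 1,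
        HasDerivAt (fun t => -Real.exp (-(z * t)) / z) (Real.exp (-(z * t))) t := by
      intro t _
      have h1 : HasDerivAt (fun t : ℝ => -(z * t)) (-z) t := by
        have h0 := ((hasDerivAt_id t).const_mul z).neg
        rw [mul_one] at h0
        exact h0
      have h2 := (Real.hasDerivAt_exp (-(z * t))).comp t h1
      have h3 := h2.neg.div_const z
      refine h3.congr_deriv ?_
      field_simp
    rw [intervalIntegral.integral_eq_sub_of_hasDerivAt hderiv
      ((Real.continuous_exp.comp (by continuity)).intervalIntegrable _ _)]
    simp only [F, h, if_neg h, if_false, mul_one, mul_zero, neg_zero, Real.exp_zero]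
    field_simp
    ring

lemma F_nonneg {z : ℝ} : 0 ≤ F z := by
  rw [← F_eq]
  exact setIntegral_nonneg measurableSet_Icc fun t _ => (Real.exp_pos _).le

lemma F_le_one {z : ℝ} (hz : 0 ≤ z) : F z ≤ 1 := by
  rw [← F_eq]
  have h1 : (∫ t in Set.Icc (0:ℝ) 1, Real.exp (-(z * t))) ≤ ∫ _t in Set.Icc (0:ℝ) 1, (1:ℝ) := by
    apply setIntegral_mono_on _ (integrable_const _) measurableSet_Icc
    · intro t ht
      rw [Real.exp_le_one_iff]
      simpa using mul_nonneg hz ht.1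
    · exact (Real.continuous_exp.comp (by continuity)).integrableOn_Icc
  simpa [Real.volume_Icc] using h1

lemma prod_exp_eq {n : ℕ} (p : ℝ) (x y : Fin n → ℝ) :
    (∏ q ∈ Finset.univ.filter (fun q : Fin n × Fin n => q.1 ≠ q.2),
      Real.exp (-(p * x q.1 * y q.2)))
      = ∏ j, Real.exp (-((p * ∑ i ∈ Finset.univ.erase j, x i) * y j)) := by
  classical
  rw [Finset.prod_filter, ← Finset.univ_product_univ, Finset.prod_product_right]
  refine Finset.prod_congr rfl fun j _ => ?_
  rw [← Finset.prod_filter, Finset.filter_ne', ← Real.exp_sum]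
  congr 1
  rw [Finset.mul_sum, Finset.sum_mul, ← Finset.sum_neg_distrib]

lemma fact_nonneg {p a b : ℝ} (hp0 : 0 < p) (hp1 : p ≤ 1)
    (ha : a ∈ Set.Icc (0:ℝ) 1) (hb : b ∈ Set.Icc (0:ℝ) 1) : 0 ≤ 1 - p * a * b := by
  have h1 : a * b ≤ 1 := by nlinarith [ha.1, ha.2, hb.1, hb.2]
  have h2 : 0 ≤ a * b := mul_nonneg ha.1 hb.1
  have h3 : p * (a * b) ≤ 1 * 1 := mul_le_mul hp1 h1 h2 zero_le_one
  nlinarith [h3]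

/-- For `n ≥ 1`, `p ∈ (0,1]`:
`∫_{[0,1]^{2n}} ∏_{i≠j} (1 - p x_i y_j) dx dy ≤ ∫_{[0,1]^n} ∏ⱼ F(p Σ_{i≠j} x_i) dx`. -/
theorem integral_prod_le (n : ℕ) (hn : 1 ≤ n) (p : ℝ) (hp : p ∈ Set.Ioc (0 : ℝ) 1) :
    let μn : Measure (Fin n → ℝ) := Measure.pi fun _ => volume.restrict (Set.Icc (0 : ℝ) 1)
    (∫ x, ∫ y, (∏ q ∈ Finset.univ.filter (fun q : Fin n × Fin n => q.1 ≠ q.2),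
        (1 - p * x q.1 * y q.2)) ∂μn ∂μn) ≤
      ∫ x, (∏ j, F (p * ∑ i ∈ Finset.univ.erase j, x i)) ∂μn := by
  intro μn
  obtain ⟨hp0, hp1⟩ := hp
  haveI hpr : IsProbabilityMeasure ((volume : Measure ℝ).restrict (Set.Icc 0 1)) :=
    ⟨by simp [Real.volume_Icc]⟩
  haveI : IsProbabilityMeasure μn := by unfold μn; infer_instance
  have hae : ∀ᵐ x ∂μn, ∀ i, x i ∈ Set.Icc (0:ℝ) 1 := by
    rw [MeasureTheory.ae_all_iff]
    intro i
    exact (Measure.tendsto_eval_ae_ae (i := i)).eventually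
      (ae_restrict_mem measurableSet_Icc)
  -- nonnegativity of the inner product a.e.
  have hPnn : ∀ (x : Fin n → ℝ), (∀ i, x i ∈ Set.Icc (0:ℝ) 1) →
      ∀ᵐ y ∂μn, 0 ≤ ∏ q ∈ Finset.univ.filter (fun q : Fin n × Fin n => q.1 ≠ q.2),
        (1 - p * x q.1 * y q.2) := by
    intro x hx
    filter_upwards [hae] with y hy
    refine Finset.prod_nonneg fun q _ => ?_
    exact fact_nonneg hp0 hp1 (hx q.1) (hy q.2)
  apply integral_mono_of_nonneg
  · -- outer integrand nonneg a.e.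
    filter_upwards [hae] with x hx
    exact integral_nonneg_of_ae (hPnn x hx)
  · -- integrability of the RHS
    have mF : Measurable F := by
      unfold F
      exact Measurable.ite (measurableSet_eq) measurable_const
        ((measurable_const.sub (Real.measurable_exp.comp measurable_neg)).div measurable_id)
    apply Integrable.mono' (integrable_const (1:ℝ))
    · refine (Finset.measurable_prod _ fun j _ => mF.comp ?_).aestronglyMeasurable
      exact (measurable_const.mul (Finset.measurable_sum _ fun i _ => measurable_pi_apply i))
    · filter_upwards [hae] with x hx
      have hnn : ∀ j : Fin n, (0:ℝ) ≤ p * ∑ i ∈ Finset.univ.erase j, x i := fun j =>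
        mul_nonneg hp0.le (Finset.sum_nonneg fun i _ => (hx i).1)
      rw [Real.norm_eq_abs, abs_of_nonneg (Finset.prod_nonneg fun j _ => F_nonneg)]
      exact Finset.prod_le_one (fun j _ => F_nonneg) (fun j _ => F_le_one (hnn j))
  · -- a.e. pointwise comparison
    filter_upwards [hae] with x hx
    have hxnn : ∀ i, (0:ℝ) ≤ x i := fun i => (hx i).1
    have key : (∫ y, (∏ q ∈ Finset.univ.filter (fun q : Fin n × Fin n => q.1 ≠ q.2),
          (1 - p * x q.1 * y q.2)) ∂μn)
        ≤ ∫ y, (∏ q ∈ Finset.univ.filter (fun q : Fin n × Fin n => q.1 ≠ q.2),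
          Real.exp (-(p * x q.1 * y q.2))) ∂μn := by
      apply integral_mono_of_nonneg (hPnn x hx)
      · apply Integrable.mono' (integrable_const (1:ℝ))
        · refine Continuous.aestronglyMeasurable ?_
          exact continuous_finset_prod _ fun q _ =>
            Real.continuous_exp.comp (((continuous_const.mul continuous_const).mul
              (continuous_apply q.2)).neg)
        · filter_upwards [hae] with y hy
          have hprod_nn : (0:ℝ) ≤ ∏ q ∈ Finset.univ.filter
              (fun q : Fin n × Fin n => q.1 ≠ q.2), Real.exp (-(p * x q.1 * y q.2)) :=
            Finset.prod_nonneg fun q _ => (Real.exp_pos _).le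
          rw [Real.norm_eq_abs, abs_of_nonneg hprod_nn]
          refine Finset.prod_le_one (fun q _ => (Real.exp_pos _).le) fun q _ => ?_
          rw [Real.exp_le_one_iff, neg_nonpos]
          exact mul_nonneg (mul_nonneg hp0.le (hxnn q.1)) (hy q.2).1
      · filter_upwards [hae] with y hy
        refine Finset.prod_le_prod (fun q _ => ?_) (fun q _ => ?_)
        · exact fact_nonneg hp0 hp1 (hx q.1) (hy q.2)
        · have := Real.add_one_le_exp (-(p * x q.1 * y q.2))
          linarith
    refine key.trans ?_
    have : (∫ y, (∏ q ∈ Finset.univ.filter (fun q : Fin n × Fin n => q.1 ≠ q.2),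
          Real.exp (-(p * x q.1 * y q.2))) ∂μn)
        = ∏ j, F (p * ∑ i ∈ Finset.univ.erase j, x i) := by
      simp_rw [prod_exp_eq p x]
      have h3 := pi_prod_integral (n := n) ((volume : Measure ℝ).restrict (Set.Icc 0 1))
        (fun j t => Real.exp (-((p * ∑ i ∈ Finset.univ.erase j, x i) * t)))
      exact h3.trans (Finset.prod_congr rfl fun j _ => F_eq _)
    rw [this]
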